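/- arXiv:1701.05330 — 3 statements merged into one kernel-verified Lean document; each statement's English description precedes it below -/
import Mathlib

section
/- The regular monomorphisms in the category of Banach spaces and linear contractions are precisely the isometric linear inclusions. -/
open CategoryTheory

/-- The category `Ban¹` of Banach spaces over `𝕜` and linear contractions. -/
structure Ban (𝕜 : Type) [RCLike 𝕜] : Type 1 where
  carrier : Type
  [isNormedAddCommGroup : NormedAddCommGroup carrier]
  [isNormedSpace : NormedSpace 𝕜 carrier]
  [isCompleteSpace : CompleteSpace carrier]

attribute [instance] Ban.isNormedAddCommGroup Ban.isNormedSpace Ban.isCompleteSpace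

instance (𝕜 : Type) [RCLike 𝕜] : CoeSort (Ban 𝕜) Type := ⟨Ban.carrier⟩

noncomputable instance Ban.category (𝕜 : Type) [RCLike 𝕜] : Category (Ban 𝕜) where
  Hom X Y := {f : X →L[𝕜] Y // ‖f‖ ≤ 1}
  id X := ⟨ContinuousLinearMap.id 𝕜 X, ContinuousLinearMap.norm_id_le⟩
  comp f g := ⟨g.1.comp f.1,
    le_trans (ContinuousLinearMap.opNorm_comp_le _ _)
      (mul_le_one₀ g.2 (norm_nonneg _) f.2)⟩
  id_comp f := Subtype.ext (ContinuousLinearMap.comp_id f.1)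
  comp_id f := Subtype.ext (ContinuousLinearMap.id_comp f.1)
  assoc f g h := Subtype.ext (ContinuousLinearMap.comp_assoc h.1 g.1 f.1).symm

open Limits in
/-- The regular monomorphisms in `Ban¹` are precisely the isometric
linear inclusions. -/
theorem regularMono_iff_isometry (𝕜 : Type) [RCLike 𝕜] {X Y : Ban 𝕜} (f : X ⟶ Y) :
    Nonempty (CategoryTheory.RegularMono f) ↔ Isometry f.1 := by
  have hcomp : ∀ {A B C : Ban 𝕜} (a : A ⟶ B) (b : B ⟶ C) (x : A),
      (a ≫ b).1 x = b.1 (a.1 x) := fun _ _ _ => rfl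
  constructor
  · rintro ⟨⟨Z, g, h, w, isLim⟩⟩
    -- contractive bound
    have hf1 : ∀ x : X.carrier, ‖f.1 x‖ ≤ ‖x‖ := fun x =>
      (f.1.le_opNorm x).trans (by
        have := mul_le_mul_of_nonneg_right f.2 (norm_nonneg x)
        simpa using this)
    -- the kernel of g - h, as an object of Ban
    set K := LinearMap.ker ((g.1 - h.1 : Y.carrier →L[𝕜] Z.carrier) : Y.carrier →ₗ[𝕜] Z.carrier) with hK
    haveI : IsClosed (K : Set Y.carrier) := ContinuousLinearMap.isClosed_ker _
    let E : Ban 𝕜 := ⟨K⟩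
    let ι : E ⟶ Y := ⟨K.subtypeL, Submodule.norm_subtypeL_le K⟩
    have wι : ι ≫ g = ι ≫ h := by
      apply Subtype.ext
      apply ContinuousLinearMap.ext
      intro e
      have he : (g.1 - h.1) (e : Y.carrier) = 0 := e.2
      rw [ContinuousLinearMap.sub_apply] at he
      exact sub_eq_zero.1 he
    obtain ⟨l, hl⟩ := Fork.IsLimit.lift' isLim ι wι
    -- f corestricted to K
    have hmem : ∀ x : X.carrier, f.1 x ∈ K := by
      intro x
      have hw := congrArg Subtype.val w
      have hw' := ContinuousLinearMap.ext_iff.1 hw x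
      simp only [LinearMap.mem_ker, hK]
      have : g.1 (f.1 x) = h.1 (f.1 x) := hw'
      simp [ContinuousLinearMap.sub_apply, this]
    let f'L : X.carrier →L[𝕜] K := f.1.codRestrict K hmem
    have hf'norm : ‖f'L‖ ≤ 1 := by
      apply ContinuousLinearMap.opNorm_le_bound _ zero_le_one
      intro x
      have : ‖f'L x‖ = ‖f.1 x‖ := rfl
      rw [this, one_mul]
      exact hf1 x
    let f' : X ⟶ E := ⟨f'L, hf'norm⟩
    have hfactor : f' ≫ ι = f := by
      apply Subtype.ext
      apply ContinuousLinearMap.ext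
      intro x
      rfl
    have hid : f' ≫ l = 𝟙 X := by
      apply Fork.IsLimit.hom_ext isLim
      rw [Category.assoc, hl, hfactor, Category.id_comp, Fork.ι_ofι]
    have hli : ∀ x : X.carrier, l.1 (f'L x) = x := by
      intro x
      have := congrArg Subtype.val hid
      exact ContinuousLinearMap.ext_iff.1 this x
    refine AddMonoidHomClass.isometry_of_norm f.1 fun x => le_antisymm (hf1 x) ?_
    have h1 : ‖x‖ = ‖l.1 (f'L x)‖ := by rw [hli x]
    have h2 : ‖l.1 (f'L x)‖ ≤ ‖l.1‖ * ‖f'L x‖ := l.1.le_opNorm _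
    have h3 : ‖(f'L x : K)‖ = ‖f.1 x‖ := rfl
    have h4 : ‖l.1‖ * ‖f'L x‖ ≤ 1 * ‖f'L x‖ :=
      mul_le_mul_of_nonneg_right l.2 (norm_nonneg _)
    calc ‖x‖ = ‖l.1 (f'L x)‖ := h1
      _ ≤ ‖l.1‖ * ‖f'L x‖ := h2
      _ ≤ 1 * ‖f'L x‖ := h4
      _ = ‖f.1 x‖ := by rw [one_mul, h3]
  · intro hf
    have hnorm : ∀ x : X.carrier, ‖f.1 x‖ = ‖x‖ := fun x =>
      hf.norm_map_of_map_zero (map_zero f.1) x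
    let fL : X.carrier →ₗ[𝕜] Y.carrier := (f.1 : X.carrier →ₗ[𝕜] Y.carrier)
    have hinj : Function.Injective fL := hf.injective
    set S := LinearMap.range fL with hS
    haveI hScl : IsClosed (S : Set Y.carrier) := by
      have := hf.isClosedEmbedding.isClosed_range
      simpa [hS, fL, LinearMap.coe_range] using this
    let Z : Ban 𝕜 := ⟨Y.carrier ⧸ S⟩
    let π : Y.carrier →L[𝕜] Z.carrier :=
      LinearMap.mkContinuous S.mkQ 1 (fun y => by
        rw [one_mul]; exact Submodule.Quotient.norm_mk_le S y)
    let g : Y ⟶ Z := ⟨π, LinearMap.mkContinuous_norm_le _ zero_le_one _⟩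
    let h0 : Y ⟶ Z := ⟨0, by simp⟩
    have hπ : ∀ y : Y.carrier, π y = Submodule.Quotient.mk y := fun y => rfl
    have w : f ≫ g = f ≫ h0 := by
      apply Subtype.ext
      apply ContinuousLinearMap.ext
      intro x
      have : f.1 x ∈ S := LinearMap.mem_range_self fL x
      simp only [hcomp]
      show π (f.1 x) = (0 : Y.carrier →L[𝕜] Z.carrier) (f.1 x)
      rw [hπ]
      exact ((Submodule.Quotient.mk_eq_zero S).2 this).trans (ContinuousLinearMap.zero_apply _).symm
    -- the lift construction
    have memS : ∀ {W : Ban 𝕜} (u : W ⟶ Y), u ≫ g = u ≫ h0 →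
        ∀ p : W.carrier, u.1 p ∈ S := by
      intro W u hu p
      have := ContinuousLinearMap.ext_iff.1 (congrArg Subtype.val hu) p
      have h0' : π (u.1 p) = 0 := this
      rw [hπ] at h0'
      exact (Submodule.Quotient.mk_eq_zero S).1 h0'
    let e := LinearEquiv.ofInjective fL hinj
    refine ⟨⟨Z, g, h0, w, ?_⟩⟩
    refine Fork.IsLimit.mk _ (fun s => ?_) (fun s => ?_) (fun s m hm => ?_)
    · -- lift
      have hmem := memS s.ι s.condition
      let uC : s.pt.carrier →L[𝕜] Y.carrier := s.ι.1
      let L : s.pt.carrier →ₗ[𝕜] X.carrier :=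
        e.symm.toLinearMap ∘ₗ
          (LinearMap.codRestrict S (uC : s.pt.carrier →ₗ[𝕜] Y.carrier)
            (fun p => hmem p))
      have hfL : ∀ p, f.1 (L p) = s.ι.1 p := fun p =>
        LinearEquiv.ofInjective_symm_apply fL (h := hinj) _
      have hLnorm : ∀ p, ‖L p‖ ≤ 1 * ‖p‖ := by
        intro p
        rw [one_mul, ← hnorm (L p), hfL p]
        calc ‖s.ι.1 p‖ ≤ ‖s.ι.1‖ * ‖p‖ := s.ι.1.le_opNorm p
          _ ≤ 1 * ‖p‖ := mul_le_mul_of_nonneg_right s.ι.2 (norm_nonneg _)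
          _ = ‖p‖ := one_mul _
      exact ⟨LinearMap.mkContinuous L 1 hLnorm,
        LinearMap.mkContinuous_norm_le _ zero_le_one _⟩
    · -- fac
      apply Subtype.ext
      apply ContinuousLinearMap.ext
      intro p
      exact LinearEquiv.ofInjective_symm_apply fL (h := hinj) _
    · -- uniq
      apply Subtype.ext
      apply ContinuousLinearMap.ext
      intro p
      apply hinj
      have h1 : f.1 (m.1 p) = s.ι.1 p :=
        ContinuousLinearMap.ext_iff.1 (congrArg Subtype.val hm) p
      show f.1 (m.1 p) = f.1 _
      rw [h1]
      show _ = fL _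
      exact (LinearEquiv.ofInjective_symm_apply fL (h := hinj)
        ⟨s.ι.1 p, memS s.ι s.condition p⟩).symm
end

section
/- If ι : V → W is a linear contraction between Banach spaces such that the dual map ι* : W* → V* is a split epimorphism (admits a contractive linear section), then ι is an isometric inclusion. -/
/-- If the dual map of a linear contraction `ι : V → W` admits a
contractive linear section, then `ι` is an isometric inclusion. -/
theorem isometry_of_dual_split_epi (𝕜 : Type) [RCLike 𝕜]
    (V W : Type) [NormedAddCommGroup V] [NormedSpace 𝕜 V] [CompleteSpace V]
    [NormedAddCommGroup W] [NormedSpace 𝕜 W] [CompleteSpace W]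
    (ι : V →L[𝕜] W) (hι : ‖ι‖ ≤ 1)
    (s : (V →L[𝕜] 𝕜) →L[𝕜] (W →L[𝕜] 𝕜)) (hs : ‖s‖ ≤ 1)
    (hsec : ∀ f : V →L[𝕜] 𝕜, (s f).comp ι = f) :
    Isometry ι := by
  apply AddMonoidHomClass.isometry_of_norm
  intro v
  refine le_antisymm ?_ ?_
  · calc ‖ι v‖ ≤ ‖ι‖ * ‖v‖ := ι.le_opNorm v
    _ ≤ 1 * ‖v‖ := by gcongr
    _ = ‖v‖ := one_mul _
  · rcases eq_or_ne v 0 with rfl | hv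
    · simp
    · obtain ⟨f, hf1, hfv⟩ := exists_dual_vector 𝕜 v (norm_ne_zero_iff.mpr hv)
      have h1 : f v = s f (ι v) := by
        have := hsec f
        calc f v = ((s f).comp ι) v := by rw [this]
        _ = s f (ι v) := rfl
      calc ‖v‖ = ‖f v‖ := by rw [hfv]; simp
      _ = ‖s f (ι v)‖ := by rw [h1]
      _ ≤ ‖s f‖ * ‖ι v‖ := (s f).le_opNorm _
      _ ≤ ‖s‖ * ‖f‖ * ‖ι v‖ := by gcongr; exact s.le_opNorm f
      _ ≤ 1 * 1 * ‖ι v‖ := by gcongr; rw [hf1]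
      _ = ‖ι v‖ := by ring
end

section
/- The functor [−, 𝕂] : Ban¹ → (Ban¹)ᵒᵖ sending a Banach space to its dual is comonadic; equivalently, [−, 𝕂] : (Ban¹)ᵒᵖ → Ban¹ is monadic. In particular, [−, 𝕂] : Ban¹ → (Ban¹)ᵒᵖ is conservative: a linear contraction f : V → W between Banach spaces is an isometric isomorphism if and only if f* : W* → V* is an isometric isomorphism. -/
open NormedSpace

/-- The dualization functor `[−, 𝕜] : Ban¹ → (Ban¹)ᵒᵖ` is comonadic and in
particular conservative: a linear contraction `f : V → W` between Banach spaces is an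
isometric isomorphism if and only if its dual `f* : W* → V*` is an isometric
isomorphism. (This conservativity is the key concrete consequence.) -/
theorem dualization_conservative (𝕜 : Type) [RCLike 𝕜]
    (V W : Type) [NormedAddCommGroup V] [NormedSpace 𝕜 V] [CompleteSpace V]
    [NormedAddCommGroup W] [NormedSpace 𝕜 W] [CompleteSpace W]
    (f : V →L[𝕜] W) (hf : ‖f‖ ≤ 1) :
    (∃ e : V ≃ₗᵢ[𝕜] W, ∀ v : V, e v = f v) ↔
    (∃ E : StrongDual 𝕜 W ≃ₗᵢ[𝕜] StrongDual 𝕜 V, ∀ (g : StrongDual 𝕜 W) (v : V), E g v = g (f v)) := by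
  constructor
  · rintro ⟨e, he⟩
    refine ⟨{ toFun := fun g => g.comp (e : V →L[𝕜] W)
              invFun := fun g => g.comp (e.symm : W →L[𝕜] V)
              map_add' := fun g₁ g₂ => by ext v; simp
              map_smul' := fun c g => by ext v; simp
              left_inv := fun g => by ext w; simp
              right_inv := fun g => by ext v; simp
              norm_map' := fun g => g.opNorm_comp_linearIsometryEquiv e }, ?_⟩
    intro g v
    simp [he v]
  · rintro ⟨E, hE⟩
    -- f is an isometry
    have hiso : ∀ v : V, ‖f v‖ = ‖v‖ := by
      intro v
      refine le_antisymm ((f.le_opNorm v).trans (by nlinarith [norm_nonneg v])) ?_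
      obtain ⟨g, hg1, hg2⟩ := exists_dual_vector'' 𝕜 v
      have h1 : (E.symm g) (f v) = g v := by
        have := hE (E.symm g) v
        rw [E.apply_symm_apply] at this; exact this.symm
      calc ‖v‖ = ‖(E.symm g) (f v)‖ := by rw [h1, hg2]; simp
        _ ≤ ‖E.symm g‖ * ‖f v‖ := (E.symm g).le_opNorm _
        _ ≤ 1 * ‖f v‖ := by
            gcongr
            rw [E.symm.norm_map]; exact hg1
        _ = ‖f v‖ := one_mul _
    set F : V →ₗᵢ[𝕜] W := ⟨f.toLinearMap, hiso⟩ with hF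
    -- range of f is closed
    have hclosed : IsClosed (Set.range f : Set W) :=
      F.isometry.isClosedEmbedding.isClosed_range
    have hrange_closed : IsClosed ((LinearMap.range (f : V →ₗ[𝕜] W) : Submodule 𝕜 W) : Set W) := by
      simpa [LinearMap.coe_range] using hclosed
    -- range of f is all of W
    have hsurj : Function.Surjective f := by
      rw [show (⇑f : V → W) = ⇑(f : V →ₗ[𝕜] W) from rfl, ← LinearMap.range_eq_top]
      by_contra hne
      obtain ⟨x, hx⟩ : ∃ x : W, (x : W) ∉ (LinearMap.range (f : V →ₗ[𝕜] W)) := by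
        by_contra h
        push_neg at h
        exact hne (Submodule.eq_top_iff'.2 h)
      set p : Submodule 𝕜 W := LinearMap.range (f : V →ₗ[𝕜] W)
      haveI : IsClosed (p : Set W) := hrange_closed
      -- the quotient W ⧸ p
      have hxq : (Submodule.Quotient.mk x : W ⧸ p) ≠ 0 := by
        simpa [Submodule.Quotient.mk_eq_zero] using hx
      obtain ⟨g, hg1, hg2⟩ := exists_dual_vector 𝕜 (Submodule.Quotient.mk x : W ⧸ p) (norm_ne_zero_iff.2 hxq)
      have hmkQ : Continuous (p.mkQ) := continuous_quot_mk
      set g' : StrongDual 𝕜 W := g.comp ⟨p.mkQ, hmkQ⟩ with hg'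
      have hg'x : g' x ≠ 0 := by
        have : ‖(Submodule.Quotient.mk x : W ⧸ p)‖ ≠ 0 := norm_ne_zero_iff.2 hxq
        simp only [hg', ContinuousLinearMap.comp_apply, ContinuousLinearMap.coe_mk']
        rw [show (p.mkQ x : W ⧸ p) = Submodule.Quotient.mk x from rfl, hg2]
        simpa using this
      have hEg' : E g' = 0 := by
        ext v
        have hmem : f v ∈ p := LinearMap.mem_range_self _ v
        have : (Submodule.Quotient.mk (f v) : W ⧸ p) = 0 :=
          (Submodule.Quotient.mk_eq_zero _).2 hmem
        rw [hE g' v]; simp only [hg', ContinuousLinearMap.comp_apply, ContinuousLinearMap.coe_mk']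
        rw [show (p.mkQ (f v) : W ⧸ p) = Submodule.Quotient.mk (f v) from rfl, this]
        simp
      have : g' = 0 := by
        have := E.injective (by rw [hEg']; simp : E g' = E 0)
        simpa using this
      exact hg'x (by rw [this]; simp)
    exact ⟨LinearIsometryEquiv.ofSurjective F hsurj, fun v => by
      rw [LinearIsometryEquiv.coe_ofSurjective]; rfl⟩
end
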